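/- As p ↓ 0, the standard normal quantile satisfies Φ^{-1}(p) = −√(ln(1/p²) − ln ln(1/p²) − ln(2π)) + o(1). -/

import Mathlib

open Real MeasureTheory Filter

noncomputable def stdNormalCDF (x : ℝ) : ℝ :=
  ∫ t in Set.Iic x, (Real.sqrt (2 * Real.pi))⁻¹ * Real.exp (-t ^ 2 / 2)

noncomputable def stdNormalQuantile : ℝ → ℝ :=
  Function.invFun stdNormalCDF

section Aux
open Set


lemma deriv_negexp (x : ℝ) : HasDerivAt (fun t => -Real.exp (-t^2/2)) (x * Real.exp (-x^2/2)) x := by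
  have h1 : HasDerivAt (fun t : ℝ => -t^2/2) (-x) x := by
    have := (hasDerivAt_pow 2 x).neg.div_const 2
    exact this.congr_deriv (by ring)
  have := (h1.exp).neg
  exact this.congr_deriv (by ring)

lemma negexp_tendsto : Tendsto (fun t : ℝ => -Real.exp (-t^2/2)) atTop (nhds 0) := by
  rw [← neg_zero]
  refine (Real.tendsto_exp_atBot.comp ?_).neg
  apply Tendsto.atBot_div_const (by norm_num : (0:ℝ) < 2)
  exact tendsto_neg_atBot_iff.mpr (tendsto_pow_atTop (by norm_num))

lemma gauss_integrable : Integrable (fun t : ℝ => Real.exp (-t^2/2)) := by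
  have h := integrable_exp_neg_mul_sq (by norm_num : (0:ℝ) < 1/2)
  have : (fun t : ℝ => Real.exp (-t^2/2)) = fun x => Real.exp (-(1/2) * x^2) := by
    funext x; ring_nf
  rw [this]; exact h

lemma integral_t_exp (a : ℝ) (ha : 0 < a) :
    ∫ t in Ioi a, t * Real.exp (-t^2/2) = Real.exp (-a^2/2) := by
  have h := integral_Ioi_of_hasDerivAt_of_nonneg' (g := fun t => -Real.exp (-t^2/2))
      (fun x _ => deriv_negexp x) (fun x hx => mul_nonneg (ha.trans hx).le (exp_pos _).le)
      negexp_tendsto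
  simpa using h

lemma integrableOn_t_exp (a : ℝ) (ha : 0 < a) :
    IntegrableOn (fun t => t * Real.exp (-t^2/2)) (Ioi a) :=
  integrableOn_Ioi_deriv_of_nonneg' (fun x _ => deriv_negexp x)
    (fun x hx => mul_nonneg (ha.trans hx).le (exp_pos _).le) negexp_tendsto

lemma tail_upper (a : ℝ) (ha : 0 < a) :
    ∫ t in Ioi a, Real.exp (-t^2/2) ≤ Real.exp (-a^2/2) / a := by
  have hmono : ∫ t in Ioi a, Real.exp (-t^2/2) ≤ ∫ t in Ioi a, (t/a) * Real.exp (-t^2/2) := by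
    apply setIntegral_mono_on gauss_integrable.integrableOn
      (((integrableOn_t_exp a ha).div_const a).congr (Filter.EventuallyEq.of_eq (by funext x; ring)))
      measurableSet_Ioi
    intro x hx
    nth_rewrite 1 [← one_mul (Real.exp (-x^2/2))]
    apply mul_le_mul_of_nonneg_right _ (exp_pos _).le
    rw [le_div_iff₀ ha]; simpa using (le_of_lt hx)
  calc ∫ t in Ioi a, Real.exp (-t^2/2) ≤ ∫ t in Ioi a, (t/a) * Real.exp (-t^2/2) := hmono
    _ = (∫ t in Ioi a, t * Real.exp (-t^2/2)) / a := by
        rw [← integral_div]; congr 1; funext t; ring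
    _ = Real.exp (-a^2/2) / a := by rw [integral_t_exp a ha]


noncomputable def Gfun (t : ℝ) : ℝ := -((t/(t^2+1)) * Real.exp (-t^2/2))
noncomputable def Gder (t : ℝ) : ℝ := ((t^4+2*t^2-1)/(t^2+1)^2) * Real.exp (-t^2/2)

lemma deriv_Gfun (x : ℝ) : HasDerivAt Gfun (Gder x) x := by
  have hd : (x^2+1) ≠ 0 := by positivity
  have h1 : HasDerivAt (fun t : ℝ => t/(t^2+1)) ((1*(x^2+1) - x*(2*x))/(x^2+1)^2) x := by
    refine (hasDerivAt_id x).div ?_ hd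
    have := (hasDerivAt_pow 2 x).add_const 1
    simpa using this
  have h2 : HasDerivAt (fun t : ℝ => Real.exp (-t^2/2)) (-x * Real.exp (-x^2/2)) x := by
    have h3 : HasDerivAt (fun t : ℝ => -t^2/2) (-x) x := by
      have := (hasDerivAt_pow 2 x).neg.div_const 2
      exact this.congr_deriv (by ring)
    simpa [mul_comm] using h3.exp
  have := (h1.mul h2).neg
  refine this.congr_deriv ?_
  unfold Gder
  field_simp
  ring

lemma Gfun_tendsto : Tendsto Gfun atTop (nhds 0) := by
  have hexp : Tendsto (fun t : ℝ => Real.exp (-t^2/2)) atTop (nhds 0) := by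
    have := negexp_tendsto.neg
    rw [neg_zero] at this
    exact this.congr (fun t => by ring)
  refine squeeze_zero_norm (fun t => ?_) hexp
  unfold Gfun
  rw [norm_neg, norm_mul, Real.norm_eq_abs, Real.norm_eq_abs, abs_of_pos (exp_pos _)]
  nth_rewrite 2 [← one_mul (Real.exp (-t^2/2))]
  apply mul_le_mul_of_nonneg_right _ (exp_pos _).le
  rw [abs_div, abs_of_pos (by positivity : (0:ℝ) < t^2+1), div_le_one (by positivity)]
  nlinarith [sq_nonneg (|t| - 1), sq_abs t]

lemma Gder_nonneg {a x : ℝ} (ha : 1 ≤ a) (hx : x ∈ Ioi a) : 0 ≤ Gder x := by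
  have h1 : (1:ℝ) < x := lt_of_le_of_lt ha hx
  unfold Gder
  apply mul_nonneg _ (exp_pos _).le
  apply div_nonneg _ (by positivity)
  nlinarith

lemma lower_tail (a : ℝ) (ha : 1 ≤ a) :
    a/(a^2+1) * Real.exp (-a^2/2) ≤ ∫ t in Ioi a, Real.exp (-t^2/2) := by
  have hint := integral_Ioi_of_hasDerivAt_of_nonneg' (fun x _ => deriv_Gfun x)
    (fun x hx => Gder_nonneg ha hx) Gfun_tendsto
  have hintOn : IntegrableOn Gder (Ioi a) := integrableOn_Ioi_deriv_of_nonneg'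
    (fun x _ => deriv_Gfun x) (fun x hx => Gder_nonneg ha hx) Gfun_tendsto
  have heq : ∫ t in Ioi a, Gder t = a/(a^2+1) * Real.exp (-a^2/2) := by
    rw [hint]; unfold Gfun; ring
  rw [← heq]
  apply setIntegral_mono_on hintOn gauss_integrable.integrableOn measurableSet_Ioi
  intro x hx
  unfold Gder
  nth_rewrite 2 [← one_mul (Real.exp (-x^2/2))]
  apply mul_le_mul_of_nonneg_right _ (exp_pos _).le
  rw [div_le_one (by positivity)]
  nlinarith [sq_nonneg (x^2+1)]


lemma log_div_tendsto : Tendsto (fun x : ℝ => Real.log x / x) atTop (nhds 0) :=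
  Real.isLittleO_log_id_atTop.tendsto_div_nhds_zero

lemma sq_tendsto : Tendsto (fun u : ℝ => u^2) atTop atTop := tendsto_pow_atTop two_ne_zero

lemma ratio_tendsto : Tendsto (fun u : ℝ => (u^2+1)/u^2) atTop (nhds 1) := by
  have h : Tendsto (fun u : ℝ => 1 + 1/u^2) atTop (nhds (1 + 0)) :=
    tendsto_const_nhds.add (tendsto_const_nhds.div_atTop sq_tendsto)
  rw [add_zero] at h
  refine h.congr' ?_
  filter_upwards [eventually_gt_atTop (0:ℝ)] with u hu
  field_simp

lemma aux_tendsto₁ : Tendsto (fun u : ℝ => 2 * Real.log ((u^2+1)/u^2)) atTop (nhds 0) := by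
  have h := (Real.continuousAt_log one_ne_zero).tendsto.comp ratio_tendsto
  rw [Real.log_one] at h
  simpa using h.const_mul 2

lemma log_sq_div_tendsto : Tendsto (fun u : ℝ => Real.log u / u^2) atTop (nhds 0) := by
  have h := (log_div_tendsto.comp sq_tendsto).div_const 2
  rw [zero_div] at h
  refine h.congr' ?_
  filter_upwards [eventually_gt_atTop (0:ℝ)] with u hu
  simp only [Function.comp]
  rw [Real.log_pow]
  push_cast
  ring

lemma log_sq1_div_tendsto : Tendsto (fun u : ℝ => Real.log (u^2+1) / u^2) atTop (nhds 0) := by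
  have h1 : Tendsto (fun u : ℝ => u^2+1) atTop atTop := tendsto_atTop_add_const_right _ 1 sq_tendsto
  have h := (log_div_tendsto.comp h1).mul ratio_tendsto
  rw [zero_mul] at h
  refine h.congr' ?_
  filter_upwards [eventually_gt_atTop (0:ℝ)] with u hu
  simp only [Function.comp]
  field_simp

lemma aux_tendsto₂ :
    Tendsto (fun u : ℝ => Real.log ((u^2 + Real.log (2*Real.pi) + 2*Real.log (u^2+1) - 2*Real.log u)/u^2))
      atTop (nhds 0) := by
  have hin : Tendsto (fun u : ℝ => (u^2 + Real.log (2*Real.pi) + 2*Real.log (u^2+1) - 2*Real.log u)/u^2)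
      atTop (nhds 1) := by
    have h : Tendsto (fun u : ℝ => 1 + (Real.log (2*Real.pi)/u^2 + 2*(Real.log (u^2+1)/u^2) - 2*(Real.log u/u^2)))
        atTop (nhds (1 + (0 + 2*0 - 2*0))) :=
      tendsto_const_nhds.add (((tendsto_const_nhds.div_atTop sq_tendsto).add
        (log_sq1_div_tendsto.const_mul 2)).sub (log_sq_div_tendsto.const_mul 2))
    norm_num at h
    refine h.congr' ?_
    filter_upwards [eventually_gt_atTop (0:ℝ)] with u hu
    field_simp
    ring
  have h := (Real.continuousAt_log one_ne_zero).tendsto.comp hin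
  rw [Real.log_one] at h
  exact h

set_option maxHeartbeats 1000000 in
lemma core (ε : ℝ) (hε : 0 < ε) : ∀ᶠ u in atTop, ∀ p : ℝ, 0 < p →
    (Real.sqrt (2*Real.pi))⁻¹ * (u/(u^2+1) * Real.exp (-u^2/2)) ≤ p →
    p ≤ (Real.sqrt (2*Real.pi))⁻¹ * (Real.exp (-u^2/2)/u) →
    |Real.sqrt (Real.log (1/p^2) - Real.log (Real.log (1/p^2)) - Real.log (2*Real.pi)) - u| < ε := by
  have hm : 0 < min ε 1 := lt_min hε one_pos
  filter_upwards [eventually_ge_atTop (1:ℝ), aux_tendsto₁.eventually_lt_const hm,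
    aux_tendsto₂.eventually_lt_const hm] with u hu he₁ he₂ p hp hlb hub
  have hu0 : (0:ℝ) < u := lt_of_lt_of_le one_pos hu
  have hu2 : (1:ℝ) ≤ u^2 := by nlinarith
  have h2pi : (1:ℝ) ≤ 2*Real.pi := by nlinarith [Real.pi_gt_three]
  have hlog2pi : 0 ≤ Real.log (2*Real.pi) := Real.log_nonneg h2pi
  have hlogu : 0 ≤ Real.log u := Real.log_nonneg hu
  have hc : (0:ℝ) < (Real.sqrt (2*Real.pi))⁻¹ := by positivity
  have hlogc : Real.log ((Real.sqrt (2*Real.pi))⁻¹) = -(Real.log (2*Real.pi)/2) := by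
    rw [Real.log_inv, Real.log_sqrt (by positivity)]
  set A := Real.log (1/p^2) with hA_def
  have hA : A = -2 * Real.log p := by
    rw [hA_def, one_div, Real.log_inv, Real.log_pow]; push_cast; ring
  -- upper bound on p gives lower bound on A
  have hAlow : u^2 + 2*Real.log u + Real.log (2*Real.pi) ≤ A := by
    have h := Real.log_le_log hp hub
    rw [Real.log_mul (ne_of_gt hc) (by positivity), Real.log_div (Real.exp_ne_zero _)
      (ne_of_gt hu0), Real.log_exp, hlogc] at h
    rw [hA]; linarith
  have hAup : A ≤ u^2 + Real.log (2*Real.pi) + 2*Real.log (u^2+1) - 2*Real.log u := by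
    have hlbpos : (0:ℝ) < (Real.sqrt (2*Real.pi))⁻¹ * (u/(u^2+1) * Real.exp (-u^2/2)) := by
      positivity
    have h := Real.log_le_log hlbpos hlb
    rw [Real.log_mul (ne_of_gt hc) (by positivity),
      Real.log_mul (by positivity) (Real.exp_ne_zero _),
      Real.log_div (ne_of_gt hu0) (by positivity), Real.log_exp, hlogc] at h
    rw [hA]; linarith
  set A₂ := u^2 + Real.log (2*Real.pi) + 2*Real.log (u^2+1) - 2*Real.log u with hA₂_def
  have hApos : 0 < A := by nlinarith
  have hA₂pos : 0 < A₂ := lt_of_lt_of_le hApos hAup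
  have hlogsq : Real.log (u^2) = 2*Real.log u := by
    rw [Real.log_pow]; push_cast; ring
  have hlogA_low : 2*Real.log u ≤ Real.log A := by
    have h := Real.log_le_log (by positivity : (0:ℝ) < u^2) (by nlinarith : u^2 ≤ A)
    rwa [hlogsq] at h
  have hlogA_up : Real.log A ≤ Real.log A₂ := Real.log_le_log hApos hAup
  set L := A - Real.log A - Real.log (2*Real.pi) with hL_def
  have hLup : L - u^2 ≤ 2 * Real.log ((u^2+1)/u^2) := by
    rw [Real.log_div (by positivity) (by positivity), hlogsq]
    have hlu : Real.log u ≤ Real.log (u^2+1) := Real.log_le_log hu0 (by nlinarith)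
    rw [hL_def]; linarith
  have hLlow : -(Real.log (A₂/u^2)) ≤ L - u^2 := by
    rw [Real.log_div (ne_of_gt hA₂pos) (by positivity), hlogsq, hL_def]
    linarith
  have habs : |L - u^2| < min ε 1 := by
    rw [abs_lt]
    exact ⟨by linarith, by linarith⟩
  have hLnonneg : 0 ≤ L := by
    have h1 := (abs_lt.mp habs).1
    have h2 := min_le_right ε 1
    linarith
  set s := Real.sqrt L with hs_def
  have hs : s^2 = L := Real.sq_sqrt hLnonneg
  have hs0 : 0 ≤ s := Real.sqrt_nonneg _
  have hprod : |s - u| * (s + u) = |L - u^2| := by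
    rw [← abs_of_nonneg (by positivity : (0:ℝ) ≤ s + u), ← abs_mul]
    congr 1; nlinarith
  have hfin : |s - u| ≤ |L - u^2| := by
    have h1 : |s - u| * 1 ≤ |s - u| * (s + u) :=
      mul_le_mul_of_nonneg_left (by linarith) (abs_nonneg _)
    linarith [hprod]
  have := min_le_left ε 1
  linarith
lemma cc_pos : 0 < (Real.sqrt (2 * Real.pi))⁻¹ := by positivity

lemma f_integrable : Integrable (fun t : ℝ => (Real.sqrt (2 * Real.pi))⁻¹ * Real.exp (-t ^ 2 / 2)) :=
  gauss_integrable.const_mul _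

lemma Phi_neg (a : ℝ) :
    stdNormalCDF (-a) = (Real.sqrt (2 * Real.pi))⁻¹ * ∫ t in Ioi a, Real.exp (-t^2/2) := by
  unfold stdNormalCDF
  have h := integral_comp_neg_Iic (-a) (fun t => (Real.sqrt (2 * Real.pi))⁻¹ * Real.exp (-t ^ 2 / 2))
  rw [neg_neg] at h
  simp only [even_two, Even.neg_pow] at h
  rw [← integral_const_mul, ← h]

lemma Phi_strictMono : StrictMono stdNormalCDF := by
  intro x y hxy
  have h := intervalIntegral.integral_Iic_sub_Iic (f := fun t : ℝ => (Real.sqrt (2 * Real.pi))⁻¹ * Real.exp (-t ^ 2 / 2))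
    (μ := volume) (a := x) (b := y) f_integrable.integrableOn f_integrable.integrableOn
  have hpos : 0 < ∫ t in x..y, (Real.sqrt (2 * Real.pi))⁻¹ * Real.exp (-t ^ 2 / 2) :=
    intervalIntegral.intervalIntegral_pos_of_pos (f_integrable.intervalIntegrable)
      (fun t => by positivity) hxy
  have : stdNormalCDF y - stdNormalCDF x > 0 := by rw [stdNormalCDF, stdNormalCDF, h]; exact hpos
  linarith

lemma Phi_pos (x : ℝ) : 0 < stdNormalCDF x := by
  rw [stdNormalCDF, setIntegral_pos_iff_support_of_nonneg_ae]
  · have : Function.support (fun t : ℝ => (Real.sqrt (2 * Real.pi))⁻¹ * Real.exp (-t ^ 2 / 2)) = univ := by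
      ext t; simp [Function.mem_support]; positivity
    rw [this, univ_inter, Real.volume_Iic]
    norm_num
  · filter_upwards with t
    positivity
  · exact f_integrable.integrableOn

lemma Phi_continuous : Continuous stdNormalCDF := by
  have h : ∀ x, stdNormalCDF x = stdNormalCDF 0 + ∫ t in (0:ℝ)..x, (Real.sqrt (2 * Real.pi))⁻¹ * Real.exp (-t ^ 2 / 2) := by
    intro x
    rw [← intervalIntegral.integral_Iic_sub_Iic f_integrable.integrableOn f_integrable.integrableOn]
    rw [stdNormalCDF, stdNormalCDF]; ring
  have := (intervalIntegral.continuous_primitive (fun a b => f_integrable.intervalIntegrable) 0)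
  exact ((continuous_const.add this).congr (fun x => (h x).symm))

lemma negexp_tendsto' : Tendsto (fun t : ℝ => Real.exp (-t^2/2)) atTop (nhds 0) := by
  have : Tendsto (fun t : ℝ => -t^2/2) atTop atBot := by
    apply Tendsto.atBot_div_const (by norm_num : (0:ℝ) < 2)
    exact tendsto_neg_atBot_iff.mpr (tendsto_pow_atTop (by norm_num))
  exact Real.tendsto_exp_atBot.comp this

lemma Phi_neg_tendsto : Tendsto (fun a : ℝ => stdNormalCDF (-a)) atTop (nhds 0) := by
  have hup : Tendsto (fun a : ℝ => (Real.sqrt (2*Real.pi))⁻¹ * (Real.exp (-a^2/2) / a)) atTop (nhds 0) := by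
    have h := (negexp_tendsto'.mul tendsto_inv_atTop_zero).const_mul (Real.sqrt (2*Real.pi))⁻¹
    simp only [zero_mul, mul_zero] at h
    exact h.congr (fun a => by ring)
  apply tendsto_of_tendsto_of_tendsto_of_le_of_le' tendsto_const_nhds hup
  · filter_upwards with a; exact (Phi_pos _).le
  · filter_upwards [eventually_gt_atTop (0:ℝ)] with a ha
    rw [Phi_neg]
    exact mul_le_mul_of_nonneg_left (tail_upper a ha) cc_pos.le

lemma Phi_quantile {p : ℝ} (h0 : 0 < p) (h1 : p < stdNormalCDF 0) :
    stdNormalCDF (stdNormalQuantile p) = p := by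
  obtain ⟨a, ha, ha0⟩ := ((Phi_neg_tendsto.eventually_lt_const h0).and
    (eventually_ge_atTop (0:ℝ))).exists
  have hivt := intermediate_value_Icc (by linarith : -a ≤ (0:ℝ)) Phi_continuous.continuousOn
  have hmem : p ∈ Icc (stdNormalCDF (-a)) (stdNormalCDF 0) := ⟨ha.le, h1.le⟩
  obtain ⟨x, _, hx⟩ := hivt hmem
  exact Function.invFun_eq ⟨x, hx⟩

lemma qtend : Tendsto (fun p => -(stdNormalQuantile p)) (nhdsWithin 0 (Set.Ioi 0)) atTop := by
  rw [tendsto_atTop]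
  intro M
  set M' := max M 1 with hM'
  have hM1 : (1:ℝ) ≤ M' := le_max_right _ _
  have hΦ : 0 < stdNormalCDF (-M') := Phi_pos _
  have hev : ∀ᶠ p in nhdsWithin 0 (Set.Ioi 0), p < stdNormalCDF (-M') :=
    Filter.Eventually.filter_mono nhdsWithin_le_nhds (eventually_lt_nhds hΦ)
  have hpos : ∀ᶠ p in nhdsWithin 0 (Set.Ioi 0), (0:ℝ) < p := eventually_mem_nhdsWithin
  filter_upwards [hev, hpos] with p hlt hp
  have hle : stdNormalCDF (-M') ≤ stdNormalCDF 0 := Phi_strictMono.monotone (by linarith)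
  have hq := Phi_quantile hp (lt_of_lt_of_le hlt hle)
  have : stdNormalQuantile p < -M' := by
    have := Phi_strictMono.lt_iff_lt (a := stdNormalQuantile p) (b := -M')
    rw [← this]; rw [hq]; exact hlt
  have : M' < -(stdNormalQuantile p) := by linarith
  linarith [le_max_left M 1]

end Aux

theorem stmt_15 :
    Tendsto (fun p : ℝ =>
        stdNormalQuantile p +
          Real.sqrt (Real.log (1 / p ^ 2) - Real.log (Real.log (1 / p ^ 2))
            - Real.log (2 * Real.pi)))
      (nhdsWithin 0 (Set.Ioi 0)) (nhds 0) := by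
  rw [Metric.tendsto_nhds]
  intro ε hε
  simp only [Real.dist_eq, sub_zero]
  have hev1 := qtend.eventually (core ε hε)
  have hev2 : ∀ᶠ p in nhdsWithin 0 (Set.Ioi 0), (0:ℝ) < p := eventually_mem_nhdsWithin
  have hev3 : ∀ᶠ p in nhdsWithin 0 (Set.Ioi 0), p < stdNormalCDF 0 :=
    Filter.Eventually.filter_mono nhdsWithin_le_nhds (eventually_lt_nhds (Phi_pos 0))
  have hev4 := qtend.eventually (eventually_ge_atTop (1:ℝ))
  filter_upwards [hev1, hev2, hev3, hev4] with p h1 h2 h3 h4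
  set u := -(stdNormalQuantile p) with hu_def
  have hu0 : (0:ℝ) < u := lt_of_lt_of_le one_pos h4
  have hq : stdNormalCDF (-u) = p := by
    rw [hu_def, neg_neg]; exact Phi_quantile h2 h3
  have hpr : p = (Real.sqrt (2*Real.pi))⁻¹ * ∫ t in Set.Ioi u, Real.exp (-t^2/2) := by
    rw [← hq, Phi_neg]
  have hlb : (Real.sqrt (2*Real.pi))⁻¹ * (u/(u^2+1) * Real.exp (-u^2/2)) ≤ p := by
    rw [hpr]; exact mul_le_mul_of_nonneg_left (lower_tail u h4) cc_pos.le
  have hub : p ≤ (Real.sqrt (2*Real.pi))⁻¹ * (Real.exp (-u^2/2)/u) := by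
    rw [hpr]; exact mul_le_mul_of_nonneg_left (tail_upper u hu0) cc_pos.le
  have hres := h1 p h2 hlb hub
  have heq : stdNormalQuantile p +
      Real.sqrt (Real.log (1 / p ^ 2) - Real.log (Real.log (1 / p ^ 2)) - Real.log (2 * Real.pi))
      = Real.sqrt (Real.log (1 / p ^ 2) - Real.log (Real.log (1 / p ^ 2)) - Real.log (2 * Real.pi)) - u := by
    rw [hu_def]; ring
  rw [heq]
  exact hres
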